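/- Let 0 → A →^ι B →^π C → 0 be a short exact sequence of abelian groups with C of bounded exponent (there is N ≥ 1 with N·c = 0 for all c ∈ C). Suppose that for every n ∈ ℕ one has ι(A) ∩ nB = n·ι(A) (purity of ι(A) in B). Then the sequence splits: there exists a group homomorphism s : C → B with π ∘ s = id_C. -/

import Mathlib

lemma zsmul_eq_of_modeq {Q : Type*} [AddCommGroup Q] {d : ℕ} {x : Q} (hd : d • x = 0)
    {a b : ℤ} (h : a ≡ b [ZMOD d]) : a • x = b • x := by
  obtain ⟨k, hk⟩ := Int.ModEq.dvd h
  have hb : b = a + (d : ℤ) * k := by linarith [hk]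
  subst hb
  have : ((d : ℤ) * k) • x = 0 := by
    rw [mul_zsmul, natCast_zsmul, smul_comm, hd, smul_zero]
  rw [add_zsmul, this, add_zero]

lemma exists_int_inv {M : ℕ} {p : ℕ} (hp : p.Prime) (hM : ¬ p ∣ M) (r : ℕ) :
    ∃ a : ℤ, (M : ℤ) * a ≡ 1 [ZMOD (p ^ r : ℕ)] := by
  have hco : Nat.Coprime M (p ^ r) :=
    Nat.Coprime.pow_right r ((Nat.coprime_comm).mp ((Nat.Prime.coprime_iff_not_dvd hp).mpr hM))
  refine ⟨Nat.gcdA M (p ^ r), ?_⟩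
  have := Nat.gcd_eq_gcd_ab M (p ^ r)
  rw [hco] at this
  have h1 : (1:ℤ) - (M : ℤ) * Nat.gcdA M (p ^ r) = (p ^ r : ℕ) * Nat.gcdB M (p ^ r) := by
    push_cast at this ⊢; linarith
  exact Int.modEq_iff_dvd.mpr ⟨_, h1⟩

lemma cyclic_pure {Q : Type*} [AddCommGroup Q] {p : ℕ} (hp : p.Prime) {w M : ℕ}
    (hM : ¬ p ∣ M) (hMw : ∀ β : Q, (p ^ w * M) • β = 0)
    {r : ℕ} {c : Q} (hc : addOrderOf c = p ^ r)
    (hmax : ∀ x : Q, p ^ w • x = 0 → p ^ r • x = 0)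
    (m : ℤ) (n : ℕ) (β : Q) (h : m • c = n • β) :
    ∃ m' : ℤ, m • c = n • (m' • c) := by
  by_cases hx0 : m • c = 0
  · exact ⟨0, by simp [hx0]⟩
  have hdc : (p ^ r : ℕ) • c = 0 := hc ▸ addOrderOf_nsmul_eq_zero c
  have hppos : 0 < p ^ r := pow_pos hp.pos r
  -- reduce m to a natural number u < p ^ r
  set u : ℕ := (m % ((p ^ r : ℕ) : ℤ)).toNat with hu
  have hdz : ((p ^ r : ℕ) : ℤ) ≠ 0 := by exact_mod_cast hppos.ne'
  have huc : (u : ℤ) = m % ((p ^ r : ℕ) : ℤ) :=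
    Int.toNat_of_nonneg (Int.emod_nonneg m hdz)
  have hmu : m • c = u • c := by
    have hmod : m ≡ (u : ℤ) [ZMOD (p ^ r : ℕ)] := by
      rw [huc]; exact (Int.emod_emod_of_dvd m dvd_rfl).symm
    rw [zsmul_eq_of_modeq hdc hmod, natCast_zsmul]
  have hud : u < p ^ r := by
    have := Int.emod_lt_of_pos m (by exact_mod_cast hppos : (0:ℤ) < ((p ^ r : ℕ) : ℤ))
    omega
  have hu0 : u ≠ 0 := by
    rintro h0
    rw [hmu, h0, zero_smul] at hx0; exact hx0 rfl
  -- p-adic decomposition of u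
  set i : ℕ := u.factorization p with hi
  set v : ℕ := u / p ^ i with hv
  have huv : p ^ i * v = u := Nat.ordProj_mul_ordCompl_eq_self u p
  have hpv : ¬ p ∣ v := Nat.not_dvd_ordCompl hp hu0
  have hir : i < r := by
    have h1 : p ^ i ≤ u := Nat.le_of_dvd (Nat.pos_of_ne_zero hu0) (Nat.ordProj_dvd u p)
    exact (Nat.pow_lt_pow_iff_right hp.one_lt).mp (lt_of_le_of_lt h1 hud)
  -- x := m • c is not killed by p ^ (r - i - 1)
  have factA : ¬ (p ^ (r - 1) * v) • c = 0 := by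
    intro h0
    have hdvd : p ^ r ∣ p ^ (r - 1) * v := hc ▸ addOrderOf_dvd_of_nsmul_eq_zero h0
    have hre : p ^ r = p ^ (r - 1) * p := by
      rw [← pow_succ]; congr 1; omega
    rw [hre] at hdvd
    exact hpv ((mul_dvd_mul_iff_left (pow_pos hp.pos (r-1)).ne').mp hdvd)
  have hrx : (p ^ r : ℕ) • (m • c) = 0 := by
    rw [hmu, smul_comm, hdc, smul_zero]
  -- n ≠ 0
  have hn0 : n ≠ 0 := by
    rintro rfl
    rw [zero_smul] at h; exact hx0 h
  set j : ℕ := n.factorization p with hj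
  set n' : ℕ := n / p ^ j with hn'
  have hnn : p ^ j * n' = n := Nat.ordProj_mul_ordCompl_eq_self n p
  have hpn' : ¬ p ∣ n' := Nat.not_dvd_ordCompl hp hn0
  -- replace β by γ with p ^ r • γ = 0 and m • c = n • γ
  have h2 : p ^ w • (M • β) = 0 := by rw [smul_smul]; exact hMw β
  have h3 : p ^ r • (M • β) = 0 := hmax _ h2
  obtain ⟨a, ha⟩ := exists_int_inv hp hM r
  set γ : Q := a • (M • β) with hγdef
  have hγ : p ^ r • γ = 0 := by rw [hγdef, smul_comm, h3, smul_zero]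
  have hxγ : m • c = n • γ := by
    have h4 : m • c = ((M : ℤ) * a) • (m • c) := by
      rw [zsmul_eq_of_modeq hrx ha, one_zsmul]
    calc m • c = ((M : ℤ) * a) • (m • c) := h4
      _ = a • ((M : ℤ) • (n • β)) := by rw [mul_comm, mul_zsmul, h]
      _ = a • ((M : ℤ) • (n • β)) := rfl
      _ = n • (a • ((M:ℤ) • β)) := by rw [smul_comm ((M:ℤ)) n β, smul_comm a n]
      _ = n • γ := by rw [hγdef, natCast_zsmul]
  set γ₂ : Q := n' • γ with hγ₂def
  have hγ₂ : p ^ r • γ₂ = 0 := by rw [hγ₂def, smul_comm, hγ, smul_zero]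
  have hxγ₂ : m • c = p ^ j • γ₂ := by
    rw [hxγ, ← hnn, mul_smul, hγ₂def]
  have hjr : j ≤ r := by
    by_contra hjr
    apply hx0
    have : p ^ j = p ^ (j - r) * p ^ r := by rw [← pow_add]; congr 1; omega
    rw [hxγ₂, this, mul_smul, hγ₂, smul_zero]
  have hrj : p ^ (r - j) • (m • c) = 0 := by
    rw [hxγ₂, smul_smul, ← pow_add]
    have : r - j + j = r := by omega
    rw [this, hγ₂]
  have hji : j ≤ i := by
    by_contra hji
    apply factA
    have e1 : p ^ (r - 1) * v = p ^ ((r - 1) - (r - j) - i) * (p ^ (r - j) * (p ^ i * v)) := by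
      have e2 : ((r - 1) - (r - j) - i) + ((r - j) + i) = r - 1 := by omega
      calc p ^ (r - 1) * v = p ^ (((r - 1) - (r - j) - i) + ((r - j) + i)) * v := by rw [e2]
        _ = p ^ ((r - 1) - (r - j) - i) * (p ^ (r - j) * (p ^ i * v)) := by
            rw [pow_add, pow_add]; ring
    rw [e1, mul_smul, mul_smul, huv, ← hmu, hrj, smul_zero]
  -- construct m'
  obtain ⟨b', hb'⟩ := exists_int_inv hp hpn' r
  refine ⟨((p ^ (i - j) * v : ℕ) : ℤ) * b', ?_⟩
  have hcast : (n : ℤ) * (((p ^ (i - j) * v : ℕ) : ℤ) * b') = (u : ℤ) * ((n' : ℤ) * b') := by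
    rw [← hnn, ← huv]
    push_cast
    have hpow : (p:ℤ) ^ j * (p:ℤ) ^ (i - j) = (p:ℤ) ^ i := by
      rw [← pow_add]; congr 1; omega
    linear_combination ((n' : ℤ) * (v : ℤ) * b') * hpow
  have hmod2 : (u : ℤ) * ((n' : ℤ) * b') ≡ (u : ℤ) * 1 [ZMOD (p ^ r : ℕ)] :=
    Int.ModEq.mul_left _ hb'
  calc m • c = u • c := hmu
    _ = ((u : ℤ) * 1) • c := by rw [mul_one, natCast_zsmul]
    _ = ((u : ℤ) * ((n' : ℤ) * b')) • c := (zsmul_eq_of_modeq hdc hmod2).symm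
    _ = ((n : ℤ) * (((p ^ (i - j) * v : ℕ) : ℤ) * b')) • c := by rw [hcast]
    _ = n • ((((p ^ (i - j) * v : ℕ) : ℤ) * b') • c) := by rw [mul_zsmul, natCast_zsmul]

def IsPureSub {B : Type*} [AddCommGroup B] (H : AddSubgroup B) : Prop :=
  ∀ (n : ℕ) (x : B), x ∈ H → ∀ b : B, x = n • b → ∃ h ∈ H, x = n • h

lemma exists_isCompl_of_pure {B : Type*} [AddCommGroup B] (G : AddSubgroup B)
    (hpure : IsPureSub G) (N : ℕ) (hN : 1 ≤ N) (hbound : ∀ b : B, N • b ∈ G) :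
    ∃ E : AddSubgroup B, IsCompl G E := by
  classical
  set S : Set (AddSubgroup B) := {E | E ⊓ G = ⊥ ∧ IsPureSub (G ⊔ E)} with hS
  have hbot : (⊥ : AddSubgroup B) ∈ S := by
    constructor
    · simp
    · simpa using hpure
  have hchains : ∀ c ⊆ S, IsChain (· ≤ ·) c → ∀ y ∈ c,
      ∃ ub ∈ S, ∀ z ∈ c, z ≤ ub := by
    intro c hcS hchain y hy
    refine ⟨sSup c, ⟨?_, ?_⟩, fun z hz => le_sSup hz⟩
    · rw [eq_bot_iff]
      rintro x ⟨hx1, hx2⟩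
      obtain ⟨E', hE'c, hxE'⟩ := (AddSubgroup.mem_sSup_of_directedOn ⟨y, hy⟩
        (IsChain.directedOn hchain)).mp hx1
      have := (hcS hE'c).1
      rw [← this]; exact ⟨hxE', hx2⟩
    · intro n x hx b hxb
      obtain ⟨g, hg, z, hz, rfl⟩ := AddSubgroup.mem_sup.mp hx
      obtain ⟨E', hE'c, hzE'⟩ := (AddSubgroup.mem_sSup_of_directedOn ⟨y, hy⟩
        (IsChain.directedOn hchain)).mp hz
      have hxE' : g + z ∈ G ⊔ E' :=
        AddSubgroup.add_mem _ (AddSubgroup.mem_sup_left hg) (AddSubgroup.mem_sup_right hzE')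
      obtain ⟨h, hh, hxh⟩ := (hcS hE'c).2 n (g + z) hxE' b hxb
      exact ⟨h, sup_le_sup_left (le_sSup hE'c) G hh, hxh⟩
  obtain ⟨E, -, hm⟩ := zorn_le_nonempty₀ S hchains ⊥ hbot
  have hdisj : E ⊓ G = ⊥ := hm.1.1
  have hpureH : IsPureSub (G ⊔ E) := hm.1.2
  set H : AddSubgroup B := G ⊔ E with hHdef
  have htop : H = ⊤ := by
    by_contra hne
    obtain ⟨b₀, hb₀⟩ : ∃ b₀ : B, b₀ ∉ H := by
      by_contra hall
      push_neg at hall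
      exact hne ((AddSubgroup.eq_top_iff' H).mpr hall)
    set mk : B →+ B ⧸ H := QuotientAddGroup.mk' H with hmkdef
    have hmk0 : ∀ x : B, mk x = 0 ↔ x ∈ H := fun x => QuotientAddGroup.eq_zero_iff x
    have hmksurj : Function.Surjective mk := QuotientAddGroup.mk'_surjective H
    have hNQ : ∀ q : B ⧸ H, N • q = 0 := by
      intro q
      obtain ⟨b, rfl⟩ := hmksurj q
      rw [← map_nsmul, hmk0]
      exact AddSubgroup.mem_sup_left (hbound b)
    -- find a prime p and an element of order p in the quotient
    have hb₀0 : mk b₀ ≠ 0 := fun h0 => hb₀ ((hmk0 b₀).mp h0)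
    set d₀ : ℕ := addOrderOf (mk b₀) with hd₀
    have hd₀N : d₀ ∣ N := addOrderOf_dvd_of_nsmul_eq_zero (hNQ (mk b₀))
    have hd₀0 : d₀ ≠ 0 := by
      intro h0; rw [h0] at hd₀N; exact absurd (zero_dvd_iff.mp hd₀N) (by omega)
    have hd₀1 : d₀ ≠ 1 := by
      intro h1
      exact hb₀0 (AddMonoid.addOrderOf_eq_one_iff.mp h1)
    obtain ⟨p, hp, hpd⟩ := Nat.exists_prime_and_dvd hd₀1
    set y₀ : B ⧸ H := (d₀ / p) • (mk b₀) with hy₀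
    have hpy₀ : p • y₀ = 0 := by
      rw [hy₀, smul_smul, Nat.mul_div_cancel' hpd]
      exact addOrderOf_nsmul_eq_zero (mk b₀)
    have hy₀0 : y₀ ≠ 0 := by
      intro h0
      have h1 : d₀ ∣ d₀ / p := addOrderOf_dvd_of_nsmul_eq_zero h0
      have h2 : d₀ / p < d₀ := Nat.div_lt_self (Nat.pos_of_ne_zero hd₀0) hp.one_lt
      have h3 : 0 < d₀ / p :=
        Nat.div_pos (Nat.le_of_dvd (Nat.pos_of_ne_zero hd₀0) hpd) hp.pos
      exact absurd (Nat.le_of_dvd h3 h1) (by omega)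
    have hordy₀ : addOrderOf y₀ = p := by
      have h1 : addOrderOf y₀ ∣ p := addOrderOf_dvd_of_nsmul_eq_zero hpy₀
      rcases (Nat.Prime.eq_one_or_self_of_dvd hp _ h1) with h2 | h2
      · exact absurd (AddMonoid.addOrderOf_eq_one_iff.mp h2) hy₀0
      · exact h2
    -- maximal p-power order
    set T : Set ℕ := {t : ℕ | ∃ q : B ⧸ H, addOrderOf q = p ^ t} with hT
    have h1T : 1 ∈ T := ⟨y₀, by rw [pow_one]; exact hordy₀⟩
    have hTbdd : BddAbove T := by
      refine ⟨N, fun t ht => ?_⟩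
      obtain ⟨q, hq⟩ := ht
      have h1 : p ^ t ∣ N := hq ▸ addOrderOf_dvd_of_nsmul_eq_zero (hNQ q)
      have h2 : p ^ t ≤ N := Nat.le_of_dvd (by omega) h1
      exact le_trans (Nat.lt_pow_self hp.one_lt : t < p ^ t).le h2
    set r : ℕ := sSup T with hr
    obtain ⟨c, hc⟩ : ∃ q : B ⧸ H, addOrderOf q = p ^ r := Nat.sSup_mem ⟨1, h1T⟩ hTbdd
    have hr1 : 1 ≤ r := le_csSup hTbdd h1T
    -- p-adic data of N
    set w : ℕ := N.factorization p with hw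
    set M : ℕ := N / p ^ w with hM
    have hNpM : p ^ w * M = N := Nat.ordProj_mul_ordCompl_eq_self N p
    have hpM : ¬ p ∣ M := Nat.not_dvd_ordCompl hp (by omega)
    have hMw : ∀ β : B ⧸ H, (p ^ w * M) • β = 0 := by rw [hNpM]; exact hNQ
    have hmax : ∀ q : B ⧸ H, p ^ w • q = 0 → p ^ r • q = 0 := by
      intro q hq
      have h1 : addOrderOf q ∣ p ^ w := addOrderOf_dvd_of_nsmul_eq_zero hq
      obtain ⟨t, htw, ht⟩ := (Nat.dvd_prime_pow hp).mp h1
      have htr : t ≤ r := le_csSup hTbdd ⟨q, ht⟩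
      exact addOrderOf_dvd_iff_nsmul_eq_zero.mp (ht ▸ pow_dvd_pow p htr)
    -- lift c to an element b' of order p ^ r
    obtain ⟨b₁, hb₁⟩ := hmksurj c
    have hprH : p ^ r • b₁ ∈ H := by
      rw [← hmk0, map_nsmul, hb₁, ← hc]
      exact addOrderOf_nsmul_eq_zero c
    obtain ⟨h₀, hh₀H, hph₀⟩ := hpureH (p ^ r) (p ^ r • b₁) hprH b₁ rfl
    set b' : B := b₁ - h₀ with hb'def
    have hb'tor : p ^ r • b' = 0 := by rw [hb'def, smul_sub, ← hph₀, sub_self]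
    have hmkb' : mk b' = c := by
      rw [hb'def, map_sub, (hmk0 h₀).mpr hh₀H, sub_zero, hb₁]
    have hc0 : c ≠ 0 := by
      intro h0
      have : addOrderOf c = 1 := by rw [h0]; exact addOrderOf_zero
      rw [hc] at this
      have := hp.one_lt
      have hle : p ≤ p ^ r := Nat.le_self_pow (by omega) p
      omega
    have hb'H : b' ∉ H := fun hmem => hc0 (hmkb' ▸ (hmk0 b').mpr hmem)
    -- key: multiples of c that vanish kill b'
    have hkill : ∀ m : ℤ, m • c = 0 → m • b' = 0 := by
      intro m hm
      have h1 : ((p ^ r : ℕ) : ℤ) ∣ m := by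
        rw [← hc]
        exact addOrderOf_dvd_iff_zsmul_eq_zero.mpr hm
      obtain ⟨k, rfl⟩ := h1
      rw [mul_zsmul, natCast_zsmul, smul_comm, hb'tor, smul_zero]
    -- the extended subgroup
    set E' : AddSubgroup B := E ⊔ AddSubgroup.zmultiples b' with hE'def
    have hE'1 : E' ⊓ G = ⊥ := by
      rw [eq_bot_iff]
      rintro x ⟨hxE', hxG⟩
      obtain ⟨e, he, z, hz, rfl⟩ := AddSubgroup.mem_sup.mp hxE'
      obtain ⟨m, rfl⟩ := AddSubgroup.mem_zmultiples_iff.mp hz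
      have hzH : m • b' ∈ H := by
        have h1 : e + m • b' ∈ H := AddSubgroup.mem_sup_left hxG
        have h2 : e ∈ H := AddSubgroup.mem_sup_right he
        simpa using AddSubgroup.sub_mem H h1 h2
      have h3 : m • c = 0 := by
        rw [← hmkb', ← map_zsmul, hmk0]
        exact hzH
      rw [hkill m h3, add_zero]
      rw [hkill m h3, add_zero] at hxG
      have : e ∈ E ⊓ G := ⟨he, hxG⟩
      rw [hdisj] at this
      exact this
    have hGE' : G ⊔ E' = H ⊔ AddSubgroup.zmultiples b' := by
      rw [hE'def, hHdef, sup_assoc]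
    have hE'2 : IsPureSub (G ⊔ E') := by
      intro n x hx b hxb
      rw [hGE'] at hx
      obtain ⟨h, hhH, z, hz, rfl⟩ := AddSubgroup.mem_sup.mp hx
      obtain ⟨m, rfl⟩ := AddSubgroup.mem_zmultiples_iff.mp hz
      have hmkx : m • c = n • (mk b) := by
        have h1 : mk (h + m • b') = n • mk b := by rw [← map_nsmul, ← hxb]
        rw [map_add, (hmk0 h).mpr hhH, zero_add, map_zsmul, hmkb'] at h1
        exact h1
      obtain ⟨m', hm'⟩ := cyclic_pure hp hpM hMw hc hmax m n (mk b) hmkx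
      have hdiff : (m - n * m') • c = 0 := by
        rw [sub_zsmul, mul_zsmul, natCast_zsmul, ← hm']
        abel
      have hdiffb : (m - n * m') • b' = 0 := hkill _ hdiff
      have hmb' : m • b' = n • (m' • b') := by
        have h1 : m • b' = (m - (n : ℤ) * m') • b' + ((n : ℤ) * m') • b' := by
          rw [← add_zsmul]
          congr 1
          ring
        rw [h1, hdiffb, zero_add, mul_zsmul, natCast_zsmul]
      have hxh : h = n • b - m • b' := by rw [← hxb]; abel
      have hxh2 : h = n • (b - m' • b') := by rw [smul_sub, hxh, hmb']
      obtain ⟨h₁, hh₁, hh₁eq⟩ := hpureH n h hhH (b - m' • b') hxh2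
      refine ⟨h₁ + m' • b', ?_, ?_⟩
      · rw [hGE']
        exact AddSubgroup.add_mem _ (AddSubgroup.mem_sup_left hh₁)
          (AddSubgroup.mem_sup_right (AddSubgroup.mem_zmultiples_iff.mpr ⟨m', rfl⟩))
      · rw [smul_add, ← hh₁eq, ← hmb']
    have hE'S : E' ∈ S := ⟨hE'1, hE'2⟩
    have hle : E' ≤ E := hm.2 hE'S le_sup_left
    have hb'E : b' ∈ E' :=
      AddSubgroup.mem_sup_right (AddSubgroup.mem_zmultiples b')
    exact hb'H (AddSubgroup.mem_sup_right (hle hb'E))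
  exact ⟨E, ⟨disjoint_iff.mpr (by rw [inf_comm]; exact hdisj), codisjoint_iff.mpr htop⟩⟩



theorem pure_split {A B C : Type*} [AddCommGroup A] [AddCommGroup B] [AddCommGroup C]
    (ι : A →+ B) (π : B →+ C)
    (hι : Function.Injective ι) (hπ : Function.Surjective π)
    (hexact : ι.range = π.ker)
    (N : ℕ) (hN : 1 ≤ N) (hexp : ∀ c : C, N • c = 0)
    (hpure : ∀ (n : ℕ) (a : A) (x : B), ι a = n • x → ∃ a' : A, ι a = n • ι a') :
    ∃ s : C →+ B, π.comp s = AddMonoidHom.id C := by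
  set G : AddSubgroup B := ι.range with hG
  have hpureG : IsPureSub G := by
    rintro n x ⟨a, rfl⟩ b hxb
    obtain ⟨a', ha'⟩ := hpure n a b hxb
    exact ⟨ι a', ⟨a', rfl⟩, ha'⟩
  have hbound : ∀ b : B, N • b ∈ G := by
    intro b
    rw [hexact]
    simp only [AddMonoidHom.mem_ker, map_nsmul]
    rw [hexp (π b)]
  obtain ⟨E, hcompl⟩ := exists_isCompl_of_pure G hpureG N hN hbound
  set φ : E →+ C := π.comp E.subtype with hφ
  have hinj : Function.Injective φ := by
    rw [injective_iff_map_eq_zero]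
    intro e he
    have h1 : (e : B) ∈ π.ker := by simpa [AddMonoidHom.mem_ker, hφ] using he
    have h2 : (e : B) ∈ G := by rw [hexact]; exact h1
    have h3 : (e : B) ∈ G ⊓ E := ⟨h2, e.2⟩
    rw [hcompl.inf_eq_bot] at h3
    exact Subtype.ext (AddSubgroup.mem_bot.mp h3)
  have hsurj : Function.Surjective φ := by
    intro cc
    obtain ⟨b, rfl⟩ := hπ cc
    have hb : b ∈ G ⊔ E := by rw [hcompl.sup_eq_top]; trivial
    obtain ⟨g, hg, e, he, rfl⟩ := AddSubgroup.mem_sup.mp hb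
    refine ⟨⟨e, he⟩, ?_⟩
    have hg0 : π g = 0 := by
      have h4 : g ∈ π.ker := by rw [← hexact]; exact hg
      simpa [AddMonoidHom.mem_ker] using h4
    simp [hφ, map_add, hg0]
  set eqv : E ≃+ C := AddEquiv.ofBijective φ ⟨hinj, hsurj⟩ with heqv
  refine ⟨E.subtype.comp eqv.symm.toAddMonoidHom, ?_⟩
  ext cc
  simp only [AddMonoidHom.comp_apply, AddMonoidHom.id_apply, AddEquiv.coe_toAddMonoidHom]
  have h5 : φ (eqv.symm cc) = cc := by
    have := eqv.apply_symm_apply cc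
    rwa [heqv] at this
  simpa [hφ] using h5
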